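/- arXiv:1605.08990 — 6 statements merged into one kernel-verified Lean document; each statement's English description precedes it below -/
import Mathlib

section
/- Let P_m = 1 + √(m/(m-1)) for m ≥ 2. Then π_{P_m}(m·1^∞) - (m-1) has the same sign as (1 + α) - m, where α ≈ 1.32472 is the unique positive root of x^3 - x - 1 (the first Pisot number). Equivalently, π_{P_m}(m1^∞) ≥ m - 1 iff m ≤ 1 + α. -/
/-- With `P_m = 1 + √(m/(m-1))`, the quantity `π_{P_m}(m1^∞) - (m-1)` has the
same sign as `(1 + α) - m`, where `α` is the unique positive root of `x^3 - x - 1`.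
Equivalently, `π_{P_m}(m1^∞) ≥ m - 1` iff `m ≤ 1 + α`. -/
theorem stmt_4 (m α : ℝ) (hm : 2 ≤ m) (hα : 0 < α) (hroot : α ^ 3 - α - 1 = 0) :
    (0 < (m - 1) / (1 + Real.sqrt (m / (m - 1))) + 1 / Real.sqrt (m / (m - 1)) - (m - 1)
        ↔ m < 1 + α) ∧
    ((m - 1) / (1 + Real.sqrt (m / (m - 1))) + 1 / Real.sqrt (m / (m - 1)) - (m - 1) = 0
        ↔ m = 1 + α) ∧
    ((m - 1) / (1 + Real.sqrt (m / (m - 1))) + 1 / Real.sqrt (m / (m - 1)) - (m - 1) < 0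
        ↔ 1 + α < m) ∧
    (m - 1 ≤ (m - 1) / (1 + Real.sqrt (m / (m - 1))) + 1 / Real.sqrt (m / (m - 1))
        ↔ m ≤ 1 + α) := by
  have htpos : (0 : ℝ) < m - 1 := by linarith
  have ht : (1 : ℝ) ≤ m - 1 := by linarith
  set s := Real.sqrt (m / (m - 1)) with hs
  have hxpos : (0 : ℝ) < m / (m - 1) := by positivity
  have hspos : 0 < s := Real.sqrt_pos.mpr hxpos
  have hs2 : s ^ 2 = m / (m - 1) := Real.sq_sqrt hxpos.le
  have hkey : s ^ 2 * (m - 1) = m := by rw [hs2]; field_simp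
  have hα1 : 1 < α := by nlinarith [pow_pos hα 3, sq_nonneg (α - 1), sq_nonneg α, mul_pos hα hα]
  have mono : ∀ a b : ℝ, 1 ≤ a → 1 ≤ b → a < b → a ^ 3 - a < b ^ 3 - b := by
    intro a b ha hb hab
    nlinarith [mul_pos (sub_pos.mpr hab) (show (0:ℝ) < b ^ 2 + a * b + a ^ 2 - 1 by nlinarith)]
  have hE : (m - 1) / (1 + s) + 1 / s - (m - 1) = (s - (m - 1)) / (s * (1 + s)) := by
    have h1 : (1 : ℝ) + s ≠ 0 := by positivity
    field_simp
    nlinarith [hkey]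
  have hden : 0 < s * (1 + s) := by positivity
  -- t < α ↔ t³ < t + 1, for t ≥ 1
  have hcubelt : m - 1 < α ↔ (m - 1) ^ 3 < m := by
    constructor
    · intro h
      have := mono (m - 1) α ht hα1.le h
      nlinarith
    · intro h
      by_contra hc
      push_neg at hc
      rcases eq_or_lt_of_le hc with h' | h'
      · rw [h'] at hroot; nlinarith
      · have := mono α (m - 1) hα1.le ht h'
        nlinarith
  have hcubegt : α < m - 1 ↔ m < (m - 1) ^ 3 := by
    constructor
    · intro h
      have := mono α (m - 1) hα1.le ht h
      nlinarith
    · intro h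
      by_contra hc
      push_neg at hc
      rcases eq_or_lt_of_le hc with h' | h'
      · rw [← h'] at hroot; nlinarith
      · have := mono (m - 1) α ht hα1.le h'
        nlinarith
  have hA : m - 1 < s ↔ m - 1 < α := by
    rw [hs, Real.lt_sqrt (by linarith), lt_div_iff₀ htpos, hcubelt]
    constructor <;> intro h <;> nlinarith
  have hB : s < m - 1 ↔ α < m - 1 := by
    rw [hs, Real.sqrt_lt' htpos, div_lt_iff₀ htpos, hcubegt]
    constructor <;> intro h <;> nlinarith
  have hC : s = m - 1 ↔ m - 1 = α := by
    constructor
    · intro h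
      rcases lt_trichotomy (m - 1) α with h' | h' | h'
      · exact absurd (hA.mpr h') (by rw [h]; exact lt_irrefl _)
      · exact h'
      · exact absurd (hB.mpr h') (by rw [h]; exact lt_irrefl _)
    · intro h
      rcases lt_trichotomy s (m - 1) with h' | h' | h'
      · exact absurd (hB.mp h') (by rw [h]; exact lt_irrefl _)
      · exact h'
      · exact absurd (hA.mp h') (by rw [h]; exact lt_irrefl _)
  refine ⟨?_, ?_, ?_, ?_⟩
  · rw [hE, lt_div_iff₀ hden, zero_mul, sub_pos, hA]
    constructor <;> intro h <;> linarith
  · rw [hE, div_eq_zero_iff]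
    constructor
    · rintro (h | h)
      · have : s = m - 1 := by linarith [sub_eq_zero.mp h]
        linarith [hC.mp this]
      · exact absurd h hden.ne'
    · intro h
      left
      have : s = m - 1 := hC.mpr (by linarith)
      linarith
  · rw [hE, div_lt_iff₀ hden, zero_mul, sub_neg, hB]
    constructor <;> intro h <;> linarith
  · rw [← sub_nonneg, hE, le_div_iff₀ hden, zero_mul, sub_nonneg]
    constructor
    · intro h
      rcases eq_or_lt_of_le h with h' | h'
      · have h2 : m - 1 = α := hC.mp h'.symm
        linarith
      · linarith [hA.mp h']
    · intro h
      rcases eq_or_lt_of_le h with h' | h'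
      · exact (hC.mpr (by linarith)).ge
      · exact (hA.mpr (by linarith)).le
end

section
/- The system of equations (m-1)q/(q^2-1) = 1 and (m-1)/q + (m-1)/q^2 + 1/(q-1) = m-1 has a unique solution (m, q) with q > 2; this q is the unique root greater than 2 of q^2(q-1)(q^2-q-3) = 1, and m = 1 + q - 1/q. Numerically m ≈ 2.91286 and q ≈ 2.34018. -/
noncomputable def fq : ℝ → ℝ := fun q => q^5 - 2*q^4 - 2*q^3 + 3*q^2

lemma fq_strict : ∀ a b : ℝ, 2 < a → a < b → fq a < fq b := by
  have h : StrictMonoOn fq (Set.Ici 2) := by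
    apply strictMonoOn_of_deriv_pos (convex_Ici 2)
    · exact (Continuous.continuousOn (by unfold fq; continuity))
    · intro x hx
      rw [interior_Ici] at hx
      have hx' : (2:ℝ) < x := hx
      have hd : HasDerivAt fq (5*x^4 - 2*(4*x^3) - 2*(3*x^2) + 3*(2*x)) x := by
        unfold fq
        have := ((hasDerivAt_pow 5 x).sub ((hasDerivAt_pow 4 x).const_mul 2)).sub
          ((hasDerivAt_pow 3 x).const_mul 2) |>.add ((hasDerivAt_pow 2 x).const_mul 3)
        refine this.congr_deriv ?_
        push_cast
        ring
      rw [hd.deriv]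
      nlinarith [sq_nonneg x, sq_nonneg (x-2)]
  intro a b ha hab
  exact h (Set.mem_Ici.2 ha.le) (Set.mem_Ici.2 (ha.le.trans hab.le)) hab

lemma fq_root : ∃ c : ℝ, 2.34017 < c ∧ c < 2.34018 ∧ fq c = 1 := by
  have hcont : ContinuousOn fq (Set.Icc 2.34017 2.34018) := by
    unfold fq; fun_prop
  have h1 : fq 2.34017 < 1 := by unfold fq; norm_num
  have h2 : (1:ℝ) < fq 2.34018 := by unfold fq; norm_num
  have := intermediate_value_Ioo (by norm_num : (2.34017:ℝ) ≤ 2.34018) hcont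
  have hmem : (1:ℝ) ∈ Set.Ioo (fq 2.34017) (fq 2.34018) := ⟨h1, h2⟩
  obtain ⟨c, hc, hfc⟩ := this hmem
  exact ⟨c, hc.1, hc.2, hfc⟩

lemma root_bounds (q : ℝ) (hq : 2 < q) (hf : fq q = 1) :
    2.34017 < q ∧ q < 2.34018 := by
  constructor
  · by_contra h
    push_neg at h
    rcases eq_or_lt_of_le h with h | h
    · have : fq 2.34017 < 1 := by unfold fq; norm_num
      rw [h] at hf; linarith
    · have := fq_strict q 2.34017 hq h
      have : fq 2.34017 < 1 := by unfold fq; norm_num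
      linarith [fq_strict q 2.34017 hq h]
  · by_contra h
    push_neg at h
    rcases eq_or_lt_of_le h with h | h
    · have : (1:ℝ) < fq 2.34018 := by unfold fq; norm_num
      rw [← h] at hf; linarith
    · have h1 : (1:ℝ) < fq 2.34018 := by unfold fq; norm_num
      have := fq_strict 2.34018 q (by norm_num) h
      linarith

lemma root_unique (a b : ℝ) (ha : 2 < a) (hb : 2 < b) (hfa : fq a = 1) (hfb : fq b = 1) :
    a = b := by
  rcases lt_trichotomy a b with h | h | h
  · have := fq_strict a b ha h; linarith
  · exact h
  · have := fq_strict b a hb h; linarith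

lemma key (m q : ℝ) (hq : 2 < q)
    (h1 : (m - 1) * q / (q ^ 2 - 1) = 1)
    (h2 : (m - 1) / q + (m - 1) / q ^ 2 + 1 / (q - 1) = m - 1) :
    fq q = 1 ∧ m = 1 + q - 1 / q := by
  have hq0 : q ≠ 0 := by linarith
  have hq1 : q - 1 ≠ 0 := by intro h; nlinarith
  have hq2 : q ^ 2 - 1 ≠ 0 := by nlinarith
  rw [div_eq_one_iff_eq hq2] at h1
  have hm : m = 1 + q - 1 / q := by
    field_simp
    nlinarith [h1]
  refine ⟨?_, hm⟩
  subst hm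
  field_simp at h2
  unfold fq
  have hq3 : q ^ 3 ≠ 0 := pow_ne_zero 3 hq0
  have h0 : q ^ 3 * ((q^5 - 2*q^4 - 2*q^3 + 3*q^2) - 1) = 0 := by linear_combination (-q^3) * h2
  rcases mul_eq_zero.1 h0 with h | h
  · exact absurd h hq3
  · linarith

lemma sat (q : ℝ) (hq : 2 < q) (hf : fq q = 1) :
    (1 + q - 1 / q - 1) * q / (q ^ 2 - 1) = 1 ∧
    (1 + q - 1 / q - 1) / q + (1 + q - 1 / q - 1) / q ^ 2 + 1 / (q - 1) = 1 + q - 1 / q - 1 := by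
  have hq0 : q ≠ 0 := by linarith
  have hq1 : q - 1 ≠ 0 := by intro h; nlinarith
  have hq2 : q ^ 2 - 1 ≠ 0 := by nlinarith
  unfold fq at hf
  constructor
  · field_simp
    ring
  · field_simp
    linear_combination (-1) * hf

/-- The system `(m-1)q/(q^2-1) = 1` and `(m-1)/q + (m-1)/q^2 + 1/(q-1) = m-1`
has a unique solution `(m, q)` with `q > 2`; this `q` is the unique root `> 2` of
`q^2(q-1)(q^2-q-3) = 1`, with `m = 1 + q - 1/q`, numerically `m ≈ 2.91286`,
`q ≈ 2.34018`. -/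
theorem stmt_10 :
    (∃! p : ℝ × ℝ, 2 < p.2 ∧
      (p.1 - 1) * p.2 / (p.2 ^ 2 - 1) = 1 ∧
      (p.1 - 1) / p.2 + (p.1 - 1) / p.2 ^ 2 + 1 / (p.2 - 1) = p.1 - 1) ∧
    (∀ m q : ℝ, 2 < q →
      (m - 1) * q / (q ^ 2 - 1) = 1 →
      (m - 1) / q + (m - 1) / q ^ 2 + 1 / (q - 1) = m - 1 →
      q ^ 2 * (q - 1) * (q ^ 2 - q - 3) = 1 ∧ m = 1 + q - 1 / q ∧
      (∀ q' : ℝ, 2 < q' → q' ^ 2 * (q' - 1) * (q' ^ 2 - q' - 3) = 1 → q' = q) ∧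
      |m - 2.91286| < 0.0001 ∧ |q - 2.34018| < 0.0001) := by
  obtain ⟨c, hc1, hc2, hfc⟩ := fq_root
  have hc : 2 < c := by linarith
  constructor
  · refine ⟨(1 + c - 1 / c, c), ⟨hc, (sat c hc hfc).1, (sat c hc hfc).2⟩, ?_⟩
    rintro ⟨m, q⟩ ⟨hq, h1, h2⟩
    obtain ⟨hfq, hm⟩ := key m q hq h1 h2
    have hqc : q = c := root_unique q c hq hc hfq hfc
    simp only [Prod.mk.injEq]
    exact ⟨by rw [hm, hqc], hqc⟩
  · intro m q hq h1 h2
    obtain ⟨hfq, hm⟩ := key m q hq h1 h2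
    have hb := root_bounds q hq hfq
    have hq0 : (0:ℝ) < q := by linarith
    refine ⟨by unfold fq at hfq; linarith [hfq]; , hm, ?_, ?_, ?_⟩
    · intro q' hq' hfq'
      exact root_unique q' q hq' hq (by unfold fq; nlinarith [hfq']) hfq
    · rw [hm, abs_lt]
      constructor
      · have : 1 / q < 1 / 2.34017 := by
          apply one_div_lt_one_div_of_lt <;> norm_num [hb.1]
          linarith [hb.1]
        nlinarith [hb.1, this]
      · have : 1 / 2.34018 < 1 / q := by
          apply one_div_lt_one_div_of_lt <;> [linarith; exact hb.2]
        nlinarith [hb.2, this]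
    · rw [abs_lt]; constructor <;> linarith [hb.1, hb.2]
end

section
/- The system π_q(m(m1)^∞) = m - 1 and q = m - 1 has a unique solution with q > 1, namely q = (1 + √13)/2 and m = (3 + √13)/2, where π_q(m(m1)^∞) = (m-1)/q + 1/(q-1) + (m-1)/(q^2-1). -/
/-- The system `π_q(m(m1)^∞) = m - 1` and `q = m - 1` has a unique solution with
`q > 1`, namely `q = (1+√13)/2`, `m = (3+√13)/2`, where
`π_q(m(m1)^∞) = (m-1)/q + 1/(q-1) + (m-1)/(q^2-1)`. -/
theorem stmt_13 :
    ∀ m q : ℝ, 1 < q →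
      (((m - 1) / q + 1 / (q - 1) + (m - 1) / (q ^ 2 - 1) = m - 1 ∧ q = m - 1) ↔
        (q = (1 + Real.sqrt 13) / 2 ∧ m = (3 + Real.sqrt 13) / 2)) := by
  intro m q hq
  have hq0 : q ≠ 0 := by linarith
  have hq1 : q - 1 ≠ 0 := by intro h; nlinarith
  have hq2 : q ^ 2 - 1 ≠ 0 := by nlinarith
  have hs : Real.sqrt 13 ^ 2 = 13 := Real.sq_sqrt (by norm_num)
  have hspos : 0 < Real.sqrt 13 := Real.sqrt_pos.mpr (by norm_num)
  constructor
  · rintro ⟨h1, h2⟩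
    have hm : m = q + 1 := by linarith
    subst hm
    field_simp at h1
    have h3 : q * ((q - 1) * (q ^ 2 - q - 3)) = 0 := by
      exact mul_left_cancel₀ hq0 (show q * (q * ((q - 1) * (q ^ 2 - q - 3))) = q * 0 by linear_combination -h1)
    have hpoly : q ^ 2 - q - 3 = 0 := by
      rcases mul_eq_zero.mp h3 with h | h
      · exact absurd h hq0
      · rcases mul_eq_zero.mp h with h | h
        · exact absurd h hq1
        · exact h
    have h2q : 2 * q - 1 = Real.sqrt 13 := by
      rw [show (13:ℝ) = (2 * q - 1) ^ 2 by nlinarith]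
      exact (Real.sqrt_sq (by linarith)).symm
    constructor <;> linarith
  · rintro ⟨hqv, hmv⟩
    subst hqv hmv
    have hpoly : ((1 + Real.sqrt 13) / 2) ^ 2 - (1 + Real.sqrt 13) / 2 - 3 = 0 := by
      nlinarith [hs]
    refine ⟨?_, by ring⟩
    rw [div_add_div _ _ hq0 hq1, div_add_div _ _ (mul_ne_zero hq0 hq1) hq2,
      div_eq_iff (mul_ne_zero (mul_ne_zero hq0 hq1) hq2)]
    linear_combination (3/32 + Real.sqrt 13/32 - 3/32*Real.sqrt 13^2 - 1/32*Real.sqrt 13^3) * hs + ((1+Real.sqrt 13)/2) * (((1+Real.sqrt 13)/2) - 1) * hpoly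
end

section
/- For every m ≥ 2, setting R_m = 1 + m/(m-1), one has π_{R_m}(m(m1)^∞) < m - 1, where π_q(m(m1)^∞) = (m-1)/q + 1/(q-1) + (m-1)/(q^2-1). -/
/-- For `m ≥ 2`, with `R_m = 1 + m/(m-1)`, one has `π_{R_m}(m(m1)^∞) < m - 1`,
where `π_q(m(m1)^∞) = (m-1)/q + 1/(q-1) + (m-1)/(q^2-1)`. -/
theorem stmt_14 (m : ℝ) (hm : 2 ≤ m) :
    (m - 1) / (1 + m / (m - 1)) + 1 / ((1 + m / (m - 1)) - 1)
      + (m - 1) / ((1 + m / (m - 1)) ^ 2 - 1) < m - 1 := by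
  have h2 : (0:ℝ) < m - 1 := by linarith
  have h0 : m - 1 ≠ 0 := ne_of_gt h2
  have hq : 1 + m / (m - 1) = (2*m - 1)/(m - 1) := by field_simp; ring
  rw [hq]
  have e1 : (m - 1) / ((2*m-1)/(m-1)) = (m-1)^2/(2*m-1) := by
    rw [div_div_eq_mul_div]; ring_nf
  have e2 : (2*m-1)/(m-1) - 1 = m/(m-1) := by field_simp; ring
  have e3 : ((2*m-1)/(m-1))^2 - 1 = (3*m^2-2*m)/(m-1)^2 := by
    field_simp; ring
  have hnum : (0:ℝ) < 2*m - 1 := by linarith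
  have hm3 : (0:ℝ) < 3*m^2 - 2*m := by nlinarith
  have e4 : (m - 1) / ((3*m^2-2*m)/(m-1)^2) = (m-1)^3/(3*m^2-2*m) := by
    rw [div_div_eq_mul_div]; ring_nf
  rw [e1, e2, e3, one_div_div, e4]
  have hmpos : (0:ℝ) < m := by linarith
  rw [div_add_div _ _ (ne_of_gt hnum) (ne_of_gt hmpos),
    div_add_div _ _ (by positivity) (ne_of_gt hm3), div_lt_iff₀ (by positivity)]
  nlinarith [sq_nonneg (m-2), sq_nonneg m, mul_pos hnum hmpos, mul_pos (mul_pos hnum hmpos) hm3,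
    mul_pos h2 hmpos, sq_nonneg (m*(m-2))]
end

section
/- Let A = {a_1 < a_2 < ... < a_J} be a finite real alphabet with J ≥ 2. If q > 1 + (a_J - a_1)/min_{j>1}(a_j - a_{j-1}), then every sequence (c_i) with entries in A is the unique expansion of its value ∑ c_i/q^i in base q over A. -/
/-- Let `A = {a 0 < a 1 < ⋯ < a (J-1)}`, `J ≥ 2`. If
`q > 1 + (a (J-1) - a 0)/(a j - a (j-1))` for every `0 < j < J` (i.e. `q`
exceeds `1 +` the total spread divided by the minimal gap), then every sequence
with entries in `A` is the unique expansion of its value in base `q` over `A`. -/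
theorem stmt_17 (J : ℕ) (hJ : 2 ≤ J) (a : ℕ → ℝ)
    (hmono : ∀ i j, i < j → j < J → a i < a j)
    (q : ℝ) (hq1 : 1 < q)
    (hq : ∀ j, 0 < j → j < J → 1 + (a (J - 1) - a 0) / (a j - a (j - 1)) < q) :
    ∀ c : ℕ → ℝ, (∀ n, ∃ i < J, c n = a i) →
      ∀ d : ℕ → ℝ, (∀ n, ∃ i < J, d n = a i) →
        (∑' i : ℕ, d i / q ^ (i + 1)) = (∑' i : ℕ, c i / q ^ (i + 1)) → d = c := by
  intro c hc d hd hsum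
  by_contra hne
  have hex : ∃ n, d n ≠ c n := Function.ne_iff.mp hne
  set n := Nat.find hex with hn_def
  have hn : d n ≠ c n := Nat.find_spec hex
  have hmin : ∀ m, m < n → d m = c m := fun m hm => not_not.mp (Nat.find_min hex hm)
  have hq0 : (0:ℝ) < q := by linarith
  have hJ1 : J - 1 < J := by omega
  have ha0 : ∀ k, k < J → a 0 ≤ a k := by
    intro k hk
    rcases Nat.eq_zero_or_pos k with h | h
    · simp [h]
    · exact (hmono 0 k h hk).le
  have haJ : ∀ k, k < J → a k ≤ a (J-1) := by
    intro k hk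
    rcases Nat.lt_or_ge k (J-1) with h | h
    · exact (hmono k (J-1) h hJ1).le
    · have : k = J - 1 := by omega
      simp [this]
  set S : ℝ := a (J-1) - a 0 with hS_def
  have hbc : ∀ i, a 0 ≤ c i ∧ c i ≤ a (J-1) := by
    intro i; obtain ⟨j, hj, hje⟩ := hc i; rw [hje]; exact ⟨ha0 j hj, haJ j hj⟩
  have hbd : ∀ i, a 0 ≤ d i ∧ d i ≤ a (J-1) := by
    intro i; obtain ⟨j, hj, hje⟩ := hd i; rw [hje]; exact ⟨ha0 j hj, haJ j hj⟩
  set M : ℝ := max |a 0| |a (J-1)| with hM_def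
  have hr1 : (1:ℝ)/q < 1 := by rw [div_lt_one hq0]; exact hq1
  have hr0 : (0:ℝ) ≤ 1/q := by positivity
  have hgeo : Summable (fun i : ℕ => M * (1/q) ^ (i+1)) := by
    have := (summable_geometric_of_lt_one hr0 hr1).mul_left (M * (1/q))
    refine this.congr fun i => ?_
    rw [pow_succ]; ring
  have hbound : ∀ (f : ℕ → ℝ), (∀ i, a 0 ≤ f i ∧ f i ≤ a (J-1)) →
      Summable (fun i => f i / q ^ (i+1)) := by
    intro f hf
    refine Summable.of_norm_bounded hgeo fun i => ?_
    have hp : (0:ℝ) < q ^ (i+1) := pow_pos hq0 _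
    have : |f i| ≤ M := abs_le_max_abs_abs (hf i).1 (hf i).2
    rw [Real.norm_eq_abs, abs_div, abs_of_pos hp, one_div, inv_pow, mul_comm,
      ← div_eq_inv_mul]
    gcongr
  have hsc : Summable (fun i => c i / q ^ (i+1)) := hbound c hbc
  have hsd : Summable (fun i => d i / q ^ (i+1)) := hbound d hbd
  set e : ℕ → ℝ := fun i => d i / q ^ (i+1) - c i / q ^ (i+1) with he_def
  have he : Summable e := hsd.sub hsc
  have hzero : (∑' i, e i) = 0 := by
    rw [Summable.tsum_sub hsd hsc, hsum, sub_self]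
  have hsplit := Summable.sum_add_tsum_nat_add (n+1) he
  rw [hzero] at hsplit
  have hsum_eq : (∑ i ∈ Finset.range (n+1), e i) = e n := by
    refine Finset.sum_eq_single_of_mem n (Finset.self_mem_range_succ n) fun b hb hbn => ?_
    have hbn' : b < n := lt_of_le_of_ne (Nat.lt_succ_iff.mp (Finset.mem_range.mp hb)) hbn
    simp [he_def, hmin b hbn']
  rw [hsum_eq] at hsplit
  -- gap lemma
  have hgap : ∃ k, 0 < k ∧ k < J ∧ a k - a (k-1) ≤ |d n - c n| := by
    obtain ⟨i, hi, hie⟩ := hd n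
    obtain ⟨j, hj, hje⟩ := hc n
    have hij : i ≠ j := by rintro rfl; exact hn (hie.trans hje.symm)
    rcases Nat.lt_or_ge i j with h | h
    · refine ⟨i+1, Nat.succ_pos i, by omega, ?_⟩
      have h1 : a (i+1) ≤ a j := by
        rcases Nat.lt_or_ge (i+1) j with h' | h'
        · exact (hmono (i+1) j h' hj).le
        · have : i + 1 = j := by omega
          simp [this]
      have h2 : a i < a j := hmono i j h hj
      rw [hie, hje, abs_sub_comm, abs_of_pos (by linarith)]
      simp only [Nat.add_sub_cancel]
      linarith
    · have h : j < i := by omega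
      refine ⟨j+1, Nat.succ_pos j, by omega, ?_⟩
      have h1 : a (j+1) ≤ a i := by
        rcases Nat.lt_or_ge (j+1) i with h' | h'
        · exact (hmono (j+1) i h' hi).le
        · have : j + 1 = i := by omega
          simp [this]
      have h2 : a j < a i := hmono j i h hi
      rw [hie, hje, abs_of_pos (by linarith)]
      simp only [Nat.add_sub_cancel]
      linarith
  obtain ⟨k, hk0, hkJ, hkgap⟩ := hgap
  set g : ℝ := |d n - c n| with hg_def
  have hgappos : 0 < a k - a (k-1) := by
    have := hmono (k-1) k (by omega) hkJ; linarith
  have hSg : S < g * (q - 1) := by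
    have h1 := hq k hk0 hkJ
    have h2 : S / (a k - a (k-1)) < q - 1 := by linarith
    have h3 : S < (a k - a (k-1)) * (q - 1) := by
      rw [div_lt_iff₀ hgappos] at h2; linarith
    have h4 : (a k - a (k-1)) * (q-1) ≤ g * (q-1) :=
      mul_le_mul_of_nonneg_right hkgap (by linarith)
    linarith
  have hg0 : 0 < g := abs_pos.mpr (sub_ne_zero.mpr hn)
  -- bound on the tail
  have htail : ‖∑' i, e (i + (n+1))‖ ≤ S * (1/q)^(n+2) * (1 - 1/q)⁻¹ := by
    have hhs : HasSum (fun i : ℕ => S * (1/q)^(i+n+2)) (S * (1/q)^(n+2) * (1 - 1/q)⁻¹) := by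
      have h0 := (hasSum_geometric_of_lt_one hr0 hr1).mul_left (S * (1/q)^(n+2))
      have : (fun i : ℕ => S * (1/q)^(n+2) * (1/q)^i) = fun i : ℕ => S * (1/q)^(i+n+2) := by
        funext i; rw [pow_add]; ring
      rwa [this] at h0
    refine tsum_of_norm_bounded hhs fun i => ?_
    have hp : (0:ℝ) < q ^ (i+n+2) := pow_pos hq0 _
    have hdc : |d (i+(n+1)) - c (i+(n+1))| ≤ S := by
      have h1 := hbc (i+(n+1)); have h2 := hbd (i+(n+1))
      rw [abs_le]; constructor <;> [linarith [h1.2, h2.1]; linarith [h1.1, h2.2]]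
    have heq : e (i+(n+1)) = (d (i+(n+1)) - c (i+(n+1))) / q ^ (i+n+2) := by
      simp only [he_def]
      rw [div_sub_div_same, show i+(n+1)+1 = i+n+2 from by omega]
    rw [heq, Real.norm_eq_abs, abs_div, abs_of_pos hp, one_div, inv_pow, mul_comm S,
      ← div_eq_inv_mul]
    gcongr
  have hen : ‖e n‖ = g / q ^ (n+1) := by
    have hp : (0:ℝ) < q ^ (n+1) := pow_pos hq0 _
    simp only [he_def]
    rw [div_sub_div_same, Real.norm_eq_abs, abs_div, abs_of_pos hp]
  have heT : ‖e n‖ = ‖∑' i, e (i + (n+1))‖ := by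
    have : e n = -(∑' i, e (i + (n+1))) := by linarith
    rw [this, norm_neg]
  have hfinal : S * (1/q)^(n+2) * (1 - 1/q)⁻¹ < g / q ^ (n+1) := by
    have hp : (0:ℝ) < q ^ (n+1) := pow_pos hq0 _
    have hq1' : q - 1 ≠ 0 := by linarith
    have hinv : (1 - 1/q)⁻¹ = q/(q-1) := by
      rw [show (1 - 1/q) = (q-1)/q by field_simp, inv_div]
    have hkey : S * (1/q)^(n+2) * (1 - 1/q)⁻¹ = S / ((q-1) * q^(n+1)) := by
      rw [show (n+2) = (n+1)+1 by ring, pow_succ, hinv, one_div, inv_pow]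
      field_simp
    rw [hkey, div_lt_div_iff₀ (mul_pos (by linarith) hp) hp]
    have := mul_lt_mul_of_pos_right hSg hp
    nlinarith
  have hchain : g / q ^ (n+1) ≤ S * (1/q)^(n+2) * (1 - 1/q)⁻¹ := by
    rw [← hen, heT]; exact htail
  linarith
end

section
/- Over the alphabet {0,1} in a base q with 1 < q ≤ φ (the golden ratio), the only sequences in {0,1}^∞ that are unique expansions of their value are the constant sequences 0^∞ and 1^∞. -/
open Finset Filter

noncomputable def gsS (q y : ℝ) : ℕ → ℝ
  | 0 => y
  | n+1 => if 1 ≤ q * gsS q y n then q * gsS q y n - 1 else q * gsS q y n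

noncomputable def gdigS (q y : ℝ) (n : ℕ) : ℝ := if 1 ≤ q * gsS q y n then 1 else 0

lemma gsS_rec (q y : ℝ) (n : ℕ) : gsS q y (n+1) = q * gsS q y n - gdigS q y n := by
  simp only [gsS, gdigS]; split <;> ring

lemma gsS_bound {q y : ℝ} (hq1 : 1 < q) (hq2 : q ≤ 2) (hy0 : 0 ≤ y) (hy1 : y ≤ 1/(q-1)) :
    ∀ n, 0 ≤ gsS q y n ∧ gsS q y n ≤ 1/(q-1) := by
  intro n
  induction n with
  | zero => exact ⟨hy0, hy1⟩
  | succ n ih =>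
    have hq0 : (0:ℝ) < q - 1 := by linarith
    simp only [gsS]
    rcases le_or_gt 1 (q * gsS q y n) with h | h
    · rw [if_pos h]
      constructor
      · linarith
      · have : q * gsS q y n ≤ q * (1/(q-1)) := by
          apply mul_le_mul_of_nonneg_left ih.2 (by linarith)
        have h2 : q * (1/(q-1)) = 1/(q-1) + 1 := by field_simp; ring
        linarith
    · rw [if_neg (not_le.mpr h)]
      constructor
      · exact mul_nonneg (by linarith) ih.1
      · have : (1:ℝ) ≤ 1/(q-1) := by
          rw [le_div_iff₀ hq0]; linarith
        linarith

lemma gdigS_bin (q y : ℝ) (n : ℕ) : gdigS q y n = 0 ∨ gdigS q y n = 1 := by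
  unfold gdigS; split
  · right; rfl
  · left; rfl

lemma gsS_partial {q : ℝ} (hq1 : 1 < q) (y : ℝ) :
    ∀ N, ∑ i ∈ range N, gdigS q y i / q ^ (i+1) = y - gsS q y N / q ^ N := by
  have hq0 : q ≠ 0 := by positivity
  intro N
  induction N with
  | zero => simp [gsS]
  | succ N ih =>
    rw [Finset.sum_range_succ, ih, gsS_rec]
    have hpow : q ^ (N+1) = q ^ N * q := pow_succ q N
    have hqN : q ^ N ≠ 0 := pow_ne_zero _ hq0
    field_simp
    ring

lemma gsS_hasSum {q y : ℝ} (hq1 : 1 < q) (hq2 : q ≤ 2) (hy0 : 0 ≤ y) (hy1 : y ≤ 1/(q-1)) :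
    HasSum (fun i => gdigS q y i / q ^ (i+1)) y := by
  have hq0 : (0:ℝ) < q := by linarith
  have hnn : ∀ i, 0 ≤ gdigS q y i / q ^ (i+1) := by
    intro i
    rcases gdigS_bin q y i with h | h <;> rw [h] <;> positivity
  rw [hasSum_iff_tendsto_nat_of_nonneg hnn]
  have heq : (fun N => ∑ i ∈ range N, gdigS q y i / q ^ (i+1))
      = fun N => y - gsS q y N / q ^ N := by
    funext N; exact gsS_partial hq1 y N
  rw [heq]
  have h0 : Tendsto (fun N : ℕ => gsS q y N / q ^ N) atTop (nhds 0) := by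
    have hb : ∀ N : ℕ, gsS q y N / q ^ N ≤ (1/(q-1)) * (1/q) ^ N := by
      intro N
      rw [div_eq_mul_inv, ← inv_pow, ← one_div]
      exact mul_le_mul_of_nonneg_right (gsS_bound hq1 hq2 hy0 hy1 N).2 (by positivity)
    have ht : Tendsto (fun N : ℕ => (1/(q-1)) * (1/q) ^ N) atTop (nhds ((1/(q-1)) * 0)) :=
      Tendsto.const_mul _ (tendsto_pow_atTop_nhds_zero_of_lt_one
        (by positivity) (by rw [div_lt_one hq0]; linarith))
    rw [mul_zero] at ht
    exact squeeze_zero (fun N => div_nonneg (gsS_bound hq1 hq2 hy0 hy1 N).1 (by positivity)) hb ht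
  have := Tendsto.const_sub y h0
  simpa using this

lemma binSummable {q : ℝ} (hq1 : 1 < q) {c : ℕ → ℝ} (hb : ∀ i, c i = 0 ∨ c i = 1) :
    Summable (fun i : ℕ => c i / q ^ (i+1)) := by
  have hq0 : (0:ℝ) < q := by linarith
  apply Summable.of_nonneg_of_le
    (fun i => by rcases hb i with h | h <;> rw [h] <;> positivity)
    (fun i => ?_) (summable_geometric_of_lt_one (r := 1/q) (by positivity)
      (by rw [div_lt_one hq0]; linarith) |>.mul_left (1/q))
  have h1 : c i ≤ 1 := by rcases hb i with h | h <;> rw [h] <;> norm_num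
  calc c i / q ^ (i+1) ≤ 1 / q ^ (i+1) := by
        apply div_le_div_of_nonneg_right h1 (by positivity) |>.trans_eq rfl
    _ = 1/q * (1/q)^i := by rw [div_pow, one_pow, pow_succ]; ring

lemma binTsum_le {q : ℝ} (hq1 : 1 < q) {c : ℕ → ℝ} (hb : ∀ i, c i = 0 ∨ c i = 1) :
    (∑' i : ℕ, c i / q ^ (i+1)) ≤ 1/(q-1) := by
  have hq0 : (0:ℝ) < q := by linarith
  have hgs : Summable (fun i : ℕ => 1/q * (1/q)^i) :=
    (summable_geometric_of_lt_one (r := 1/q) (by positivity)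
      (by rw [div_lt_one hq0]; linarith)).mul_left (1/q)
  have h := Summable.tsum_le_tsum (f := fun i : ℕ => c i / q ^ (i+1))
    (g := fun i : ℕ => 1/q * (1/q)^i) (fun i => ?_) (binSummable hq1 hb) hgs
  · refine h.trans_eq ?_
    rw [tsum_mul_left, tsum_geometric_of_lt_one (by positivity)
      (by rw [div_lt_one hq0]; linarith)]
    rw [one_div, one_div]
    rw [show (1:ℝ) - q⁻¹ = (q-1)/q by field_simp]
    field_simp
  · have h1 : c i ≤ 1 := by rcases hb i with h | h <;> rw [h] <;> norm_num
    calc c i / q ^ (i+1) ≤ 1 / q ^ (i+1) :=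
          div_le_div_of_nonneg_right h1 (by positivity) |>.trans_eq rfl
      _ = 1/q * (1/q)^i := by rw [div_pow, one_pow, pow_succ]; ring

lemma tail_lt_one {q : ℝ} (hq1 : 1 < q) (hq2 : q ≤ 2) {c : ℕ → ℝ}
    (hb : ∀ i, c i = 0 ∨ c i = 1)
    (hu : ∀ d : ℕ → ℝ, (∀ i, d i = 0 ∨ d i = 1) →
        (∑' i : ℕ, d i / q ^ (i + 1)) = (∑' i : ℕ, c i / q ^ (i + 1)) → d = c)
    (n : ℕ) (hcn : c n = 0) :
    (∑' i : ℕ, c (n+1+i) / q ^ (i+1)) < 1 := by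
  by_contra hcon
  push_neg at hcon
  have hq0 : (0:ℝ) < q := by linarith
  have hbt : ∀ i, c (n+1+i) = 0 ∨ c (n+1+i) = 1 := fun i => hb _
  set x := ∑' i : ℕ, c (n+1+i) / q ^ (i+1) with hx
  have hxle : x ≤ 1/(q-1) := binTsum_le hq1 hbt
  set y := x - 1 with hy
  have hy0 : 0 ≤ y := by rw [hy]; linarith
  have hy1 : y ≤ 1/(q-1) := by rw [hy]; linarith
  set d : ℕ → ℝ := fun i => if i < n then c i else if i = n then 1
    else gdigS q y (i - (n+1)) with hd
  have hbd : ∀ i, d i = 0 ∨ d i = 1 := by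
    intro i; simp only [hd]
    split
    · exact hb i
    · split
      · right; rfl
      · exact gdigS_bin q y _
  have hdtail : ∀ i : ℕ, d (i + (n+1)) = gdigS q y i := by
    intro i; simp only [hd]
    rw [if_neg (by omega), if_neg (by omega)]
    congr 1; omega
  have hctail : ∀ i : ℕ, c (i + (n+1)) = c (n+1+i) := fun i => by rw [add_comm]
  have hpow : ∀ i : ℕ, q ^ ((i + (n+1)) + 1) = q ^ (n+1) * q ^ (i+1) := by
    intro i; rw [← pow_add]; ring_nf
  have hsplit : ∀ e : ℕ → ℝ, (∀ i, e i = 0 ∨ e i = 1) →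
      (∑' i : ℕ, e i / q ^ (i+1)) = (∑ i ∈ range (n+1), e i / q ^ (i+1))
        + (∑' i : ℕ, e (i + (n+1)) / q ^ ((i + (n+1)) + 1)) := by
    intro e hbe
    exact (Summable.sum_add_tsum_nat_add (n+1) (binSummable hq1 hbe)).symm
  have hdsum : (∑' i : ℕ, d (i + (n+1)) / q ^ ((i + (n+1)) + 1)) = y / q ^ (n+1) := by
    have : ∀ i : ℕ, d (i + (n+1)) / q ^ ((i + (n+1)) + 1)
        = (1 / q ^ (n+1)) * (gdigS q y i / q ^ (i+1)) := by
      intro i; rw [hdtail, hpow]; field_simp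
    rw [tsum_congr this, tsum_mul_left, (gsS_hasSum hq1 hq2 hy0 hy1).tsum_eq]
    ring
  have hcsum : (∑' i : ℕ, c (i + (n+1)) / q ^ ((i + (n+1)) + 1)) = x / q ^ (n+1) := by
    have : ∀ i : ℕ, c (i + (n+1)) / q ^ ((i + (n+1)) + 1)
        = (1 / q ^ (n+1)) * (c (n+1+i) / q ^ (i+1)) := by
      intro i; rw [hctail, hpow]; field_simp
    rw [tsum_congr this, tsum_mul_left, ← hx]
    ring
  have hfin : (∑ i ∈ range (n+1), d i / q ^ (i+1))
      = (∑ i ∈ range (n+1), c i / q ^ (i+1)) + 1 / q ^ (n+1) := by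
    rw [Finset.sum_range_succ, Finset.sum_range_succ]
    have h1 : ∀ i ∈ range n, d i / q ^ (i+1) = c i / q ^ (i+1) := by
      intro i hi
      rw [Finset.mem_range] at hi
      simp only [hd, if_pos hi]
    rw [Finset.sum_congr rfl h1]
    have h2 : d n = 1 := by simp [hd]
    rw [h2, hcn]
    ring
  have heq : (∑' i : ℕ, d i / q ^ (i+1)) = (∑' i : ℕ, c i / q ^ (i+1)) := by
    rw [hsplit d hbd, hsplit c hb, hdsum, hcsum, hfin]
    have : y / q ^ (n+1) + 1 / q ^ (n+1) = x / q ^ (n+1) := by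
      rw [hy]; ring
    linarith
  have hdc := hu d hbd heq
  have : d n = c n := by rw [hdc]
  simp [hd, hcn] at this

lemma compl_tsum {q : ℝ} (hq1 : 1 < q) {e : ℕ → ℝ} (hbe : ∀ i, e i = 0 ∨ e i = 1) :
    (∑' i : ℕ, (1 - e i) / q ^ (i+1))
      = (∑' i : ℕ, (1:ℝ) / q ^ (i+1)) - (∑' i : ℕ, e i / q ^ (i+1)) := by
  have h1 : Summable (fun i : ℕ => (1:ℝ) / q ^ (i+1)) :=
    binSummable hq1 (fun i => Or.inr rfl)
  rw [← Summable.tsum_sub h1 (binSummable hq1 hbe)]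
  exact tsum_congr (fun i => by ring)

lemma cotail_lt_one {q : ℝ} (hq1 : 1 < q) (hq2 : q ≤ 2) {c : ℕ → ℝ}
    (hb : ∀ i, c i = 0 ∨ c i = 1)
    (hu : ∀ d : ℕ → ℝ, (∀ i, d i = 0 ∨ d i = 1) →
        (∑' i : ℕ, d i / q ^ (i + 1)) = (∑' i : ℕ, c i / q ^ (i + 1)) → d = c)
    (n : ℕ) (hcn : c n = 1) :
    (∑' i : ℕ, (1 - c (n+1+i)) / q ^ (i+1)) < 1 := by
  set c' : ℕ → ℝ := fun i => 1 - c i with hc'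
  have hbc' : ∀ i, c' i = 0 ∨ c' i = 1 := by
    intro i; rcases hb i with h | h
    · right; simp [hc', h]
    · left; simp [hc', h]
  have hu' : ∀ d' : ℕ → ℝ, (∀ i, d' i = 0 ∨ d' i = 1) →
      (∑' i : ℕ, d' i / q ^ (i + 1)) = (∑' i : ℕ, c' i / q ^ (i + 1)) → d' = c' := by
    intro d' hbd' hsum'
    set d : ℕ → ℝ := fun i => 1 - d' i with hdd
    have hbd : ∀ i, d i = 0 ∨ d i = 1 := by
      intro i; rcases hbd' i with h | h
      · right; simp [hdd, h]
      · left; simp [hdd, h]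
    have key : ∀ e : ℕ → ℝ, (∀ i, e i = 0 ∨ e i = 1) →
        (∑' i : ℕ, (1 - e i) / q ^ (i+1))
          = (∑' i : ℕ, (1:ℝ) / q ^ (i+1)) - (∑' i : ℕ, e i / q ^ (i+1)) :=
      fun e hbe => compl_tsum hq1 hbe
    have hsum : (∑' i : ℕ, d i / q ^ (i + 1)) = (∑' i : ℕ, c i / q ^ (i + 1)) := by
      have h1 : (∑' i : ℕ, d i / q ^ (i+1))
          = (∑' i : ℕ, (1:ℝ) / q ^ (i+1)) - (∑' i : ℕ, d' i / q ^ (i+1)) := key d' hbd'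
      have h2 : (∑' i : ℕ, c' i / q ^ (i+1))
          = (∑' i : ℕ, (1:ℝ) / q ^ (i+1)) - (∑' i : ℕ, c i / q ^ (i+1)) := key c hb
      rw [h1, hsum', h2]; ring
    have := hu d hbd hsum
    funext i
    have h := congrFun this i
    simp only [hdd, hc'] at h ⊢
    linarith
  have h' := tail_lt_one hq1 hq2 hbc' hu' n (by simp [hc', hcn])
  exact h'

lemma main_aux {q : ℝ} (hq1 : 1 < q) (hqk : q^2 ≤ q + 1) {c : ℕ → ℝ}
    (hb : ∀ i, c i = 0 ∨ c i = 1)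
    (T0 : ∀ m, c m = 0 → (∑' i : ℕ, c (m+1+i) / q ^ (i+1)) < 1)
    (T1 : ∀ m, c m = 1 → (∑' i : ℕ, (1 - c (m+1+i)) / q ^ (i+1)) < 1)
    (n : ℕ) (h0 : c n = 0) (h1 : c (n+1) = 1) : False := by
  have hq0 : (0:ℝ) < q := by linarith
  have hkey : (1:ℝ) ≤ 1/q + 1/q^2 := by
    rw [div_add_div _ _ (by positivity) (by positivity), le_div_iff₀ (by positivity)]
    nlinarith
  have hnn : ∀ j, (0:ℝ) ≤ c j := by
    intro j; rcases hb j with h | h <;> rw [h] <;> norm_num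
  have hle1 : ∀ j, c j ≤ 1 := by
    intro j; rcases hb j with h | h <;> rw [h] <;> norm_num
  have step0 : ∀ m, c m = 0 → c (m+1) = 1 → c (m+2) = 0 := by
    intro m hm0 hm1
    rcases hb (m+2) with h | h
    · exact h
    exfalso
    have hs := Summable.sum_le_tsum (f := fun i : ℕ => c (m+1+i) / q ^ (i+1)) (Finset.range 2)
      (fun i _ => by
        show (0:ℝ) ≤ c (m+1+i) / q ^ (i+1)
        exact div_nonneg (hnn _) (by positivity))
      (binSummable hq1 (fun i => hb _))
    rw [Finset.sum_range_succ, Finset.sum_range_one] at hs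
    have e1 : c (m+1+0) = 1 := by rw [add_zero]; exact hm1
    have e2 : c (m+1+1) = 1 := h
    rw [e1, e2] at hs
    norm_num at hs
    have hT := T0 m hm0
    rw [one_div, one_div] at hkey
    linarith
  have step1 : ∀ m, c m = 1 → c (m+1) = 0 → c (m+2) = 1 := by
    intro m hm1 hm0
    rcases hb (m+2) with h | h
    swap
    · exact h
    exfalso
    have hbco : ∀ i : ℕ, (1 - c (m+1+i)) = 0 ∨ (1 - c (m+1+i)) = 1 := by
      intro i
      rcases hb (m+1+i) with hh | hh
      · right; rw [hh]; ring
      · left; rw [hh]; ring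
    have hs := Summable.sum_le_tsum (f := fun i : ℕ => (1 - c (m+1+i)) / q ^ (i+1)) (Finset.range 2)
      (fun i _ => by
        show (0:ℝ) ≤ (1 - c (m+1+i)) / q ^ (i+1)
        exact div_nonneg (by linarith [hle1 (m+1+i)]) (by positivity))
      (binSummable hq1 hbco)
    rw [Finset.sum_range_succ, Finset.sum_range_one] at hs
    have e1 : c (m+1+0) = 0 := by rw [add_zero]; exact hm0
    have e2 : c (m+1+1) = 0 := h
    rw [e1, e2] at hs
    norm_num at hs
    have hT := T1 m hm1
    rw [one_div, one_div] at hkey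
    linarith
  have alt : ∀ k : ℕ, c (n+1+2*k) = 1 ∧ c (n+2+2*k) = 0 := by
    intro k
    induction k with
    | zero => exact ⟨by simpa using h1, by simpa using step0 n h0 h1⟩
    | succ k ih =>
      have ha : c (n+1+2*k+2) = 1 :=
        step1 (n+1+2*k) ih.1 (by rw [show n+1+2*k+1 = n+2+2*k from by ring]; exact ih.2)
      have hb2 : c (n+2+2*k+2) = 0 :=
        step0 (n+2+2*k) ih.2 (by rw [show n+2+2*k+1 = n+1+2*k+2 from by ring]; exact ha)
      exact ⟨by rw [show n+1+2*(k+1) = n+1+2*k+2 from by ring]; exact ha,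
        by rw [show n+2+2*(k+1) = n+2+2*k+2 from by ring]; exact hb2⟩
  -- lower bound on the tail at n via the even-indexed subseries
  have hq2lt : 1/q^2 < 1 := by
    rw [div_lt_one (by positivity)]; nlinarith
  have hgsum : Summable (fun k : ℕ => 1/q * (1/q^2) ^ k) :=
    (summable_geometric_of_lt_one (by positivity) hq2lt).mul_left _
  have hle : (∑' k : ℕ, 1/q * (1/q^2) ^ k) ≤ ∑' i : ℕ, c (n+1+i) / q ^ (i+1) := by
    apply Summable.tsum_le_tsum_of_inj (fun k => 2*k) (fun a b hab => by dsimp at hab; omega)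
      (fun i _ => by rcases hb (n+1+i) with hh | hh <;> rw [hh] <;> positivity)
      (fun k => ?_) hgsum (binSummable hq1 (fun i => hb _))
    have hc1 : c (n+1+2*k) = 1 := (alt k).1
    rw [hc1]
    have : q ^ (2*k+1) = q * (q^2) ^ k := by
      rw [pow_succ, pow_mul]; ring
    rw [this]
    rw [div_pow, one_pow]
    rw [one_div, one_div, ← mul_inv, div_eq_mul_inv, one_mul]
  have hgval : (1:ℝ) ≤ ∑' k : ℕ, 1/q * (1/q^2) ^ k := by
    rw [tsum_mul_left, tsum_geometric_of_lt_one (by positivity) hq2lt]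
    have hpos : (0:ℝ) < q^2 - 1 := by nlinarith
    have h2 : (1:ℝ) - 1/q^2 = (q^2-1)/q^2 := by field_simp
    rw [h2]
    have h3 : 1/q * ((q^2-1)/q^2)⁻¹ = q/(q^2-1) := by
      rw [inv_div]
      field_simp
    rw [h3, le_div_iff₀ hpos]
    nlinarith
  have := T0 n h0
  linarith

/-- Over the alphabet `{0,1}` in a base `1 < q ≤ φ`, the only sequences in
`{0,1}^∞` that are unique expansions of their value are `0^∞` and `1^∞`. -/
theorem stmt_18 (q : ℝ) (hq1 : 1 < q) (hq2 : q ≤ (1 + Real.sqrt 5) / 2) :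
    ∀ c : ℕ → ℝ, (∀ i, c i = 0 ∨ c i = 1) →
      (∀ d : ℕ → ℝ, (∀ i, d i = 0 ∨ d i = 1) →
        (∑' i : ℕ, d i / q ^ (i + 1)) = (∑' i : ℕ, c i / q ^ (i + 1)) → d = c) →
      (∀ i, c i = 0) ∨ (∀ i, c i = 1) := by
  have hs5 : Real.sqrt 5 ^ 2 = 5 := Real.sq_sqrt (by norm_num)
  have hs5nn : 0 ≤ Real.sqrt 5 := Real.sqrt_nonneg 5
  have hs5lt : Real.sqrt 5 < 3 := by nlinarith
  have hq2' : q ≤ 2 := by linarith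
  have hqk : q ^ 2 ≤ q + 1 := by nlinarith
  intro c hb hu
  have T0 := tail_lt_one hq1 hq2' hb hu
  have T1 := cotail_lt_one hq1 hq2' hb hu
  by_contra hcon
  push_neg at hcon
  obtain ⟨h00, h11⟩ := hcon
  obtain ⟨i, hi⟩ := h00
  obtain ⟨j, hj⟩ := h11
  have hi1 : c i = 1 := (hb i).resolve_left hi
  have hj0 : c j = 0 := (hb j).resolve_right hj
  have hpat : ∃ m, (c m = 0 ∧ c (m+1) = 1) ∨ (c m = 1 ∧ c (m+1) = 0) := by
    by_contra hp
    push_neg at hp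
    have hconst : ∀ m, c (m+1) = c m := by
      intro m
      rcases hb m with h | h <;> rcases hb (m+1) with h' | h'
      · rw [h, h']
      · exact absurd h' ((hp m).1 h)
      · exact absurd h' ((hp m).2 h)
      · rw [h, h']
    have hall : ∀ m, c m = c 0 := by
      intro m
      induction m with
      | zero => rfl
      | succ m ih => rw [hconst m, ih]
    rw [hall i] at hi1
    rw [hall j] at hj0
    rw [hi1] at hj0
    norm_num at hj0
  obtain ⟨m, hm⟩ := hpat
  rcases hm with ⟨hA, hB⟩ | ⟨hA, hB⟩
  · exact main_aux hq1 hqk hb T0 T1 m hA hB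
  · set c' : ℕ → ℝ := fun i => 1 - c i with hc'
    have hbc' : ∀ i, c' i = 0 ∨ c' i = 1 := by
      intro i; rcases hb i with h | h
      · right; simp [hc', h]
      · left; simp [hc', h]
    have T0' : ∀ k, c' k = 0 → (∑' i : ℕ, c' (k+1+i) / q ^ (i+1)) < 1 := by
      intro k hk
      have hck : c k = 1 := by simp only [hc'] at hk; linarith
      exact T1 k hck
    have T1' : ∀ k, c' k = 1 → (∑' i : ℕ, (1 - c' (k+1+i)) / q ^ (i+1)) < 1 := by
      intro k hk
      have hck : c k = 0 := by simp only [hc'] at hk; linarith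
      have heq : ∀ i : ℕ, (1 - c' (k+1+i)) / q ^ (i+1) = c (k+1+i) / q ^ (i+1) := by
        intro i; simp only [hc']; ring_nf
      rw [tsum_congr heq]
      exact T0 k hck
    exact main_aux hq1 hqk hbc' T0' T1' m (by simp [hc', hA]) (by simp [hc', hB])
end
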